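/- Consider the two-user hybrid-NOMA power minimization problem: given h_{1,1}, h_{2,1}, h_{2,2} > 0 and R > 0, minimize P_{1,1} + P_{2,1} + P_{2,2} over nonnegative powers subject to log(1 + h_{1,1}P_{1,1}) ≥ R and log(1 + h_{2,1}P_{2,1}/(1 + h_{1,1}P_{1,1})) + log(1 + h_{2,2}P_{2,2}) ≥ R. Then the successive resource allocation solution is globally optimal: the optimal value of this problem equals (e^R − 1)/h_{1,1} plus the optimal value of the second-stage problem of minimizing P_{2,1} + P_{2,2} over P_{2,1}, P_{2,2} ≥ 0 subject to log(1 + e^{−R}h_{2,1}P_{2,1}) + log(1 + h_{2,2}P_{2,2}) ≥ R; moreover, taking P_{1,1} = (e^R − 1)/h_{1,1} together with any global minimizer of the second-stage problem gives a global minimizer of the two-user problem. -/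

import Mathlib

/-- Feasibility for the two-user hybrid-NOMA power minimization problem. -/
noncomputable def Feas2U (h11 h21 h22 R p11 p21 p22 : ℝ) : Prop :=
  0 ≤ p11 ∧ 0 ≤ p21 ∧ 0 ≤ p22 ∧
  R ≤ Real.log (1 + h11 * p11) ∧
  R ≤ Real.log (1 + h21 * p21 / (1 + h11 * p11)) + Real.log (1 + h22 * p22)

/-- Feasibility for the second-stage problem (user 2's power minimization after user 1
transmits at its OMA power). -/
noncomputable def FeasStage2 (a b R p1 p2 : ℝ) : Prop :=
  0 ≤ p1 ∧ 0 ≤ p2 ∧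
  R ≤ Real.log (1 + Real.exp (-R) * a * p1) + Real.log (1 + b * p2)

lemma aux_p11 {h11 R p11 : ℝ} (h1 : 0 < h11) (hp : 0 ≤ p11)
    (hc : R ≤ Real.log (1 + h11 * p11)) : (Real.exp R - 1) / h11 ≤ p11 := by
  have hpos : 0 < 1 + h11 * p11 := by positivity
  have h := (Real.le_log_iff_exp_le hpos).mp hc
  rw [div_le_iff₀ h1]
  nlinarith

lemma aux_stage2 {h11 h21 h22 R p11 p21 p22 : ℝ} (h1 : 0 < h11) (h2 : 0 < h21)
    (hf : Feas2U h11 h21 h22 R p11 p21 p22) : FeasStage2 h21 h22 R p21 p22 := by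
  obtain ⟨hp11, hp21, hp22, hc1, hc2⟩ := hf
  refine ⟨hp21, hp22, ?_⟩
  have hpos : 0 < 1 + h11 * p11 := by positivity
  have hexp : Real.exp R ≤ 1 + h11 * p11 := (Real.le_log_iff_exp_le hpos).mp hc1
  have hkey : h21 * p21 / (1 + h11 * p11) ≤ Real.exp (-R) * h21 * p21 := by
    rw [div_le_iff₀ hpos, Real.exp_neg]
    have hmul := mul_le_mul_of_nonneg_left hexp
      (by positivity : (0:ℝ) ≤ (Real.exp R)⁻¹ * (h21 * p21))
    have hl : (Real.exp R)⁻¹ * (h21 * p21) * Real.exp R = h21 * p21 := by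
      field_simp
    nlinarith [hmul, hl]
  have hlog : Real.log (1 + h21 * p21 / (1 + h11 * p11)) ≤
      Real.log (1 + Real.exp (-R) * h21 * p21) := by
    apply Real.log_le_log (by positivity)
    linarith
  linarith

lemma aux_feas2U {h11 h21 h22 R q1 q2 : ℝ} (h1 : 0 < h11) (hR : 0 < R)
    (hf : FeasStage2 h21 h22 R q1 q2) :
    Feas2U h11 h21 h22 R ((Real.exp R - 1) / h11) q1 q2 := by
  obtain ⟨hq1, hq2, hc⟩ := hf
  have hc0 : 1 + h11 * ((Real.exp R - 1) / h11) = Real.exp R := by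
    field_simp
    ring
  have hcnn : 0 ≤ (Real.exp R - 1) / h11 := by
    apply div_nonneg _ h1.le
    nlinarith [Real.add_one_le_exp R]
  refine ⟨hcnn, hq1, hq2, ?_, ?_⟩
  · rw [hc0, Real.log_exp]
  · rw [hc0]
    have : h21 * q1 / Real.exp R = Real.exp (-R) * h21 * q1 := by
      rw [Real.exp_neg, div_eq_mul_inv]; ring
    rw [this]
    exact hc

theorem stmt_3 (h11 h21 h22 R : ℝ) (h1 : 0 < h11) (h2 : 0 < h21) (h3 : 0 < h22) (hR : 0 < R) :
    (sInf {v | ∃ p11 p21 p22, Feas2U h11 h21 h22 R p11 p21 p22 ∧ v = p11 + p21 + p22} =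
      (Real.exp R - 1) / h11 +
        sInf {v | ∃ p1 p2, FeasStage2 h21 h22 R p1 p2 ∧ v = p1 + p2}) ∧
    ∀ q1 q2, FeasStage2 h21 h22 R q1 q2 →
      (∀ p1 p2, FeasStage2 h21 h22 R p1 p2 → q1 + q2 ≤ p1 + p2) →
      Feas2U h11 h21 h22 R ((Real.exp R - 1) / h11) q1 q2 ∧
      ∀ p11 p21 p22, Feas2U h11 h21 h22 R p11 p21 p22 →
        (Real.exp R - 1) / h11 + q1 + q2 ≤ p11 + p21 + p22 := by
  set c := (Real.exp R - 1) / h11 with hcdef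
  set S1 := {v | ∃ p11 p21 p22, Feas2U h11 h21 h22 R p11 p21 p22 ∧ v = p11 + p21 + p22}
  set S2 := {v | ∃ p1 p2, FeasStage2 h21 h22 R p1 p2 ∧ v = p1 + p2}
  have hstar : FeasStage2 h21 h22 R (Real.exp R * (Real.exp R - 1) / h21) 0 := by
    have h0 : (0:ℝ) ≤ Real.exp R * (Real.exp R - 1) / h21 := by
      apply div_nonneg _ h2.le
      nlinarith [Real.add_one_le_exp R, Real.exp_pos R]
    refine ⟨h0, le_refl 0, ?_⟩
    have : Real.exp (-R) * h21 * (Real.exp R * (Real.exp R - 1) / h21) = Real.exp R - 1 := by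
      rw [Real.exp_neg]
      field_simp
    rw [this]
    simp only [mul_zero, add_zero, Real.log_one]
    have : (1:ℝ) + (Real.exp R - 1) = Real.exp R := by ring
    rw [this, Real.log_exp]
  have hS2ne : S2.Nonempty := ⟨_, _, 0, hstar, rfl⟩
  have hS2bdd : BddBelow S2 := by
    refine ⟨0, fun v hv => ?_⟩
    obtain ⟨p1, p2, ⟨hp1, hp2, _⟩, rfl⟩ := hv
    linarith
  have hS1ne : S1.Nonempty := ⟨_, c, _, 0, aux_feas2U h1 hR hstar, rfl⟩
  have hS1bdd : BddBelow S1 := by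
    refine ⟨0, fun v hv => ?_⟩
    obtain ⟨p11, p21, p22, ⟨hp11, hp21, hp22, _⟩, rfl⟩ := hv
    linarith
  have hge : c + sInf S2 ≤ sInf S1 := by
    apply le_csInf hS1ne
    rintro v ⟨p11, p21, p22, hf, rfl⟩
    have hc1 : c ≤ p11 := aux_p11 h1 hf.1 hf.2.2.2.1
    have hc2 : sInf S2 ≤ p21 + p22 := csInf_le hS2bdd ⟨p21, p22, aux_stage2 h1 h2 hf, rfl⟩
    linarith
  have hle : sInf S1 ≤ c + sInf S2 := by
    have key : ∀ v ∈ S2, sInf S1 - c ≤ v := by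
      rintro v ⟨p1, p2, hf, rfl⟩
      have : sInf S1 ≤ c + (p1 + p2) :=
        csInf_le hS1bdd ⟨c, p1, p2, aux_feas2U h1 hR hf, by ring⟩
      linarith
    have := le_csInf hS2ne key
    linarith
  refine ⟨le_antisymm hle hge, ?_⟩
  intro q1 q2 hq hqmin
  refine ⟨aux_feas2U h1 hR hq, ?_⟩
  intro p11 p21 p22 hf
  have hc1 : c ≤ p11 := aux_p11 h1 hf.1 hf.2.2.2.1
  have hc2 : q1 + q2 ≤ p21 + p22 := hqmin _ _ (aux_stage2 h1 h2 hf)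
  linarith
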